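/- With a multi-valued dose, the two-way fixed-effects coefficient equals a weighted combination of level comparisons to the untreated group, β^twfe = Σ_{d ∈ 𝒟} w^{lev}(d)·(m(d) − m(d₀)), where w^{lev}(d) := (d − E[D])·p_d/Var(D); moreover Σ_{d ∈ 𝒟} w^{lev}(d) = 0, so β^twfe cannot be interpreted as a weighted average of level effects. -/

import Mathlib

open MeasureTheory

/-- Conditional expectation of `X` given the event `A`: `E[X | A] = E[X·1_A] / P(A)`. -/
noncomputable def cExp {Ω : Type*} [MeasurableSpace Ω] (P : Measure Ω)
    (X : Ω → ℝ) (A : Set Ω) : ℝ :=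
  (∫ ω in A, X ω ∂P) / (P A).toReal

/-- Mean of a real random variable. -/
noncomputable def meanR {Ω : Type*} [MeasurableSpace Ω] (P : Measure Ω) (X : Ω → ℝ) : ℝ :=
  ∫ ω, X ω ∂P

/-- Variance: `Var(X) = E[X²] − (E[X])²`. -/
noncomputable def varR {Ω : Type*} [MeasurableSpace Ω] (P : Measure Ω) (X : Ω → ℝ) : ℝ :=
  meanR P (fun ω => X ω ^ 2) - (meanR P X) ^ 2

/-- Population two-way fixed-effects coefficient from regressing the outcome change `ΔY`
on the dose `D`: `β^twfe = E[(D − E[D])·ΔY] / Var(D)`. -/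
noncomputable def betaTWFE {Ω : Type*} [MeasurableSpace Ω] (P : Measure Ω)
    (D ΔY : Ω → ℝ) : ℝ :=
  (∫ ω, (D ω - meanR P D) * ΔY ω ∂P) / varR P D

/-- Levels weight: `w^{lev}(d) = (d − E[D])·p_d / Var(D)`. -/
noncomputable def levelsWeight {Ω : Type*} [MeasurableSpace Ω] (P : Measure Ω)
    (D : Ω → ℝ) (dd : ℝ) : ℝ :=
  (dd - meanR P D) * (P {ω | D ω = dd}).toReal / varR P D

/-- TWFE as a weighted combination of level comparisons to the untreated
group: `β^twfe = Σ_{d ∈ 𝒟} w^{lev}(d)·(m(d) − m(d 0))`, where the weights sum to zero,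
so `β^twfe` cannot be interpreted as a weighted average of level effects. -/
theorem twfe_levels_decomposition
    {Ω : Type*} [MeasurableSpace Ω] (P : Measure Ω) [IsProbabilityMeasure P]
    (J : ℕ) (d : ℕ → ℝ) (hd0 : d 0 = 0)
    (hmono : ∀ i j : ℕ, i < j → j ≤ J → d i < d j)
    (D : Ω → ℝ) (hD : Measurable D)
    (hDval : ∀ ω, ∃ j ≤ J, D ω = d j)
    (hp : ∀ j ≤ J, 0 < P {ω | D ω = d j})
    (ΔY : Ω → ℝ) (hΔYm : Measurable ΔY) (hΔYi : Integrable ΔY P) :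
    betaTWFE P D ΔY =
      ∑ j ∈ Finset.Icc 0 J, levelsWeight P D (d j) *
        (cExp P ΔY {ω | D ω = d j} - cExp P ΔY {ω | D ω = d 0}) ∧
    ∑ j ∈ Finset.Icc 0 J, levelsWeight P D (d j) = 0 := by
  classical
  set s : Finset ℕ := Finset.Icc 0 J with hs
  set A : ℕ → Set Ω := fun j => {ω | D ω = d j} with hA
  have hAm : ∀ j, MeasurableSet (A j) := fun j => hD (measurableSet_singleton (d j))
  have hinj : ∀ i ∈ s, ∀ j ∈ s, i ≠ j → d i ≠ d j := by
    intro i hi j hj hij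
    rcases hij.lt_or_gt with h | h
    · exact (hmono i j h (Finset.mem_Icc.mp hj).2).ne
    · exact (hmono j i h (Finset.mem_Icc.mp hi).2).ne'
  have hdisj : (s : Set ℕ).Pairwise (Function.onFun Disjoint A) := by
    intro i hi j hj hij
    rw [Function.onFun, Set.disjoint_left]
    intro ω h1 h2
    exact hinj i hi j hj hij ((Set.mem_setOf_eq ▸ h1).symm.trans h2)
  have hcover : (⋃ j ∈ s, A j) = Set.univ := by
    ext ω; simp only [Set.mem_iUnion, Set.mem_univ, iff_true]
    obtain ⟨j, hj, hω⟩ := hDval ω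
    exact ⟨j, Finset.mem_Icc.mpr ⟨Nat.zero_le _, hj⟩, hω⟩
  have key : ∀ f : Ω → ℝ, Integrable f P →
      ∫ ω, f ω ∂P = ∑ j ∈ s, ∫ ω in A j, f ω ∂P := by
    intro f hf
    rw [← setIntegral_univ (μ := P) (f := f), ← hcover,
      integral_biUnion_finset s (fun j _ => hAm j) hdisj (fun j _ => hf.integrableOn)]
  -- abbreviations
  set p : ℕ → ℝ := fun j => (P (A j)).toReal with hpdef
  have hppos : ∀ j ∈ s, 0 < p j := by
    intro j hj
    exact ENNReal.toReal_pos (hp j (Finset.mem_Icc.mp hj).2).ne' (measure_ne_top _ _)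
  set m : ℕ → ℝ := fun j => cExp P ΔY (A j) with hmdef
  have hsumE : ∀ j ∈ s, ∫ ω in A j, ΔY ω ∂P = p j * m j := by
    intro j hj
    rw [hmdef]
    simp only [cExp]
    rw [mul_div_assoc']
    rw [mul_div_cancel_left₀ _ (hppos j hj).ne']
  -- sum of p = 1
  have hp1 : ∑ j ∈ s, p j = 1 := by
    have h1 := key (fun _ => (1:ℝ)) (integrable_const 1)
    have h2 : ∑ j ∈ s, ∫ (_ : Ω) in A j, (1:ℝ) ∂P = ∑ j ∈ s, p j :=
      Finset.sum_congr rfl fun j _ => by rw [setIntegral_const, smul_eq_mul, mul_one, measureReal_def]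
    rw [h2, integral_const] at h1
    simpa using h1.symm
  -- bound on D
  have hsne : s.Nonempty := ⟨0, Finset.mem_Icc.mpr ⟨le_rfl, Nat.zero_le _⟩⟩
  have hDbd : ∀ ω, ‖D ω‖ ≤ s.sup' hsne (fun j => |d j|) := by
    intro ω
    obtain ⟨j, hj, hω⟩ := hDval ω
    rw [hω, Real.norm_eq_abs]
    exact Finset.le_sup' (fun j => |d j|) (Finset.mem_Icc.mpr ⟨Nat.zero_le _, hj⟩)
  have hDi : Integrable D P :=
    Integrable.mono' (integrable_const _) hD.aestronglyMeasurable (ae_of_all _ hDbd)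
  set μD : ℝ := meanR P D with hμDdef
  -- mean of D
  have hμD : μD = ∑ j ∈ s, d j * p j := by
    rw [hμDdef, meanR, key D hDi]
    refine Finset.sum_congr rfl fun j hj => ?_
    rw [setIntegral_congr_fun (hAm j) (g := fun _ => d j) (fun ω hω => hω),
      setIntegral_const, smul_eq_mul, mul_comm, measureReal_def]
  -- raw weight sum is zero
  have hraw : ∑ j ∈ s, (d j - μD) * p j = 0 := by
    have : ∑ j ∈ s, (d j - μD) * p j = (∑ j ∈ s, d j * p j) - μD * ∑ j ∈ s, p j := by
      rw [Finset.mul_sum, ← Finset.sum_sub_distrib]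
      exact Finset.sum_congr rfl fun j _ => by ring
    rw [this, hp1, mul_one, ← hμD, sub_self]
  -- numerator decomposition
  have hfi : Integrable (fun ω => (D ω - μD) * ΔY ω) P := by
    refine hΔYi.bdd_mul (c := s.sup' hsne (fun j => |d j|) + ‖μD‖)
      ((hD.sub measurable_const).aestronglyMeasurable) (ae_of_all _ fun ω => ?_)
    calc ‖D ω - μD‖ ≤ ‖D ω‖ + ‖μD‖ := norm_sub_le _ _
    _ ≤ _ := by linarith [hDbd ω]
  have hN : ∫ ω, (D ω - μD) * ΔY ω ∂P = ∑ j ∈ s, (d j - μD) * (p j * m j) := by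
    rw [key _ hfi]
    refine Finset.sum_congr rfl fun j hj => ?_
    rw [setIntegral_congr_fun (hAm j) (g := fun ω => (d j - μD) * ΔY ω)
      (fun ω hω => by rw [show D ω = d j from hω]),
      integral_const_mul, hsumE j hj]
  have hw : ∀ j, levelsWeight P D (d j) = (d j - μD) * p j / varR P D := by
    intro j; rfl
  have h0s : (0:ℕ) ∈ s := Finset.mem_Icc.mpr ⟨le_rfl, Nat.zero_le _⟩
  constructor
  · rw [betaTWFE, ← hμDdef, hN]
    have : ∑ j ∈ s, levelsWeight P D (d j) * (cExp P ΔY {ω | D ω = d j} - cExp P ΔY {ω | D ω = d 0})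
        = (∑ j ∈ s, (d j - μD) * (p j * m j) - (∑ j ∈ s, (d j - μD) * p j) * m 0) / varR P D := by
      rw [Finset.sum_mul, ← Finset.sum_sub_distrib, Finset.sum_div]
      refine Finset.sum_congr rfl fun j hj => ?_
      rw [hw j]
      show _ = ((d j - μD) * (p j * m j) - (d j - μD) * p j * m 0) / varR P D
      ring
    rw [this, hraw, zero_mul, sub_zero]
  · have : ∑ j ∈ s, levelsWeight P D (d j) = (∑ j ∈ s, (d j - μD) * p j) / varR P D := by
      rw [Finset.sum_div]; exact Finset.sum_congr rfl fun j _ => hw j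
    rw [this, hraw, zero_div]
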